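/- arXiv:2012.09792 — 2 statements merged into one kernel-verified Lean document; each statement's English description precedes it below -/
import Mathlib

section
/- Let G be a group in which the centralizer of every nontrivial element is infinite cyclic, i.e., for every g ∈ G with g ≠ 1 there exists an element z ∈ G of infinite order such that the centralizer of g in G equals the cyclic subgroup generated by z. Then every nontrivial abelian subgroup A of G is contained in a unique maximal cyclic subgroup of G: there exists a unique subgroup Z of G such that Z is cyclic, A is contained in Z, and every cyclic subgroup of G containing Z is equal to Z. Moreover Z equals the centralizer of any nontrivial element of A. -/
theorem centralizer_key
    (G : Type*) [Group G]
    (hG : ∀ g : G, g ≠ 1 → ∃ z : G, ¬ IsOfFinOrder z ∧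
      Subgroup.centralizer {g} = Subgroup.zpowers z)
    (A : Subgroup G)
    (hab : ∀ a ∈ A, ∀ b ∈ A, a * b = b * a)
    (a : G) (haA : a ∈ A) (ha1 : a ≠ 1) :
    (∃ z : G, Subgroup.centralizer {a} = Subgroup.zpowers z) ∧
    A ≤ Subgroup.centralizer {a} ∧
    (∀ W : Subgroup G, (∃ w : G, W = Subgroup.zpowers w) →
      Subgroup.centralizer {a} ≤ W → W = Subgroup.centralizer {a}) := by
  obtain ⟨z, hzfin, hcz⟩ := hG a ha1
  have haself : a ∈ Subgroup.centralizer {a} :=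
    Subgroup.mem_centralizer_singleton_iff.mpr rfl
  obtain ⟨m, hm⟩ : a ∈ Subgroup.zpowers z := hcz ▸ haself
  -- centralizer {a} = centralizer {z}
  have hcc : Subgroup.centralizer ({a} : Set G) = Subgroup.centralizer {z} := by
    apply le_antisymm
    · intro x hx
      rw [hcz] at hx
      obtain ⟨k, hk⟩ := hx
      rw [Subgroup.mem_centralizer_singleton_iff, ← hk]
      exact ((Commute.refl z).zpow_left k)
    · intro x hx
      rw [Subgroup.mem_centralizer_singleton_iff] at hx ⊢
      rw [← hm]
      exact Commute.zpow_left hx.symm m |>.symm.eq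
  refine ⟨⟨z, hcz⟩, ?_, ?_⟩
  · intro b hb
    exact Subgroup.mem_centralizer_singleton_iff.mpr (hab b hb a haA)
  · rintro W ⟨w, rfl⟩ hle
    have hzW : z ∈ Subgroup.zpowers w := hle (hcz ▸ Subgroup.mem_zpowers z)
    obtain ⟨k, hk⟩ := hzW
    refine le_antisymm ?_ hle
    intro x hx
    obtain ⟨j, hj⟩ := hx
    rw [hcc, Subgroup.mem_centralizer_singleton_iff, ← hj, ← hk]
    simp [← zpow_add, ← zpow_mul, add_comm, mul_comm]
  
/-- In a group in which the centralizer of every nontrivial element is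
infinite cyclic, every nontrivial abelian subgroup is contained in a unique
maximal cyclic subgroup, which moreover equals the centralizer of any
nontrivial element of the abelian subgroup. -/
theorem abelian_subgroup_in_unique_maximal_cyclic
    (G : Type*) [Group G]
    (hG : ∀ g : G, g ≠ 1 → ∃ z : G, ¬ IsOfFinOrder z ∧
      Subgroup.centralizer {g} = Subgroup.zpowers z)
    (A : Subgroup G) (hA : A ≠ ⊥)
    (hab : ∀ a ∈ A, ∀ b ∈ A, a * b = b * a) :
    (∃! Z : Subgroup G,
      (∃ z : G, Z = Subgroup.zpowers z) ∧ A ≤ Z ∧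
      (∀ W : Subgroup G, (∃ w : G, W = Subgroup.zpowers w) → Z ≤ W → W = Z)) ∧
    (∀ Z : Subgroup G,
      ((∃ z : G, Z = Subgroup.zpowers z) ∧ A ≤ Z ∧
        (∀ W : Subgroup G, (∃ w : G, W = Subgroup.zpowers w) → Z ≤ W → W = Z)) →
      ∀ a ∈ A, a ≠ 1 → Z = Subgroup.centralizer {a}) := by
  obtain ⟨⟨a, haA⟩, ha⟩ := Subgroup.ne_bot_iff_exists_ne_one.mp hA
  have ha1 : a ≠ 1 := by simpa using ha
  have key := centralizer_key G hG A hab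
  -- uniqueness: any Z satisfying conditions equals centralizer {a'} for any nontrivial a' ∈ A
  have huniq : ∀ Z : Subgroup G,
      ((∃ z : G, Z = Subgroup.zpowers z) ∧ A ≤ Z ∧
        (∀ W : Subgroup G, (∃ w : G, W = Subgroup.zpowers w) → Z ≤ W → W = Z)) →
      ∀ a' ∈ A, a' ≠ 1 → Z = Subgroup.centralizer {a'} := by
    rintro Z ⟨⟨z, rfl⟩, hAZ, hmax⟩ a' ha'A ha'1
    obtain ⟨⟨w, hw⟩, hAC, hCmax⟩ := key a' ha'A ha'1
    -- zpowers z ≤ centralizer {a'} since z commutes with a'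
    have hz1 : Subgroup.zpowers z ≤ Subgroup.centralizer {a'} := by
      intro x hx
      obtain ⟨k, hk⟩ := hx
      have ha'z : a' ∈ Subgroup.zpowers z := hAZ ha'A
      obtain ⟨j, hj⟩ := ha'z
      rw [Subgroup.mem_centralizer_singleton_iff, ← hk, ← hj]
      simp [← zpow_add, add_comm]
    exact (hmax (Subgroup.centralizer {a'}) ⟨w, hw⟩ hz1).symm
  refine ⟨⟨Subgroup.centralizer {a}, key a haA ha1, ?_⟩, huniq⟩
  intro Z hZ
  exact huniq Z hZ a haA ha1
end

section
/- Let G be a group in which the centralizer of every nontrivial element is infinite cyclic, i.e., for every g ∈ G with g ≠ 1 there exists an element z ∈ G of infinite order such that the centralizer of g in G equals the cyclic subgroup generated by z. Let γ, η ∈ G be nontrivial, and write γ = γ̄^r and η = η̄^s with γ̄, η̄ ∈ G primitive and integers r, s ≥ 1. Then there exists a group automorphism φ of G with φ(γ) = η if and only if r = s and there exists a group automorphism ψ of G with ψ(γ̄) = η̄. -/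
/-- In a group in which the centralizer of every nontrivial element is
infinite cyclic, two nontrivial elements `γ = gbar ^ r` and `η = hbar ^ s`
(with `gbar`, `hbar` primitive and `r, s ≥ 1`) differ by an automorphism if
and only if `r = s` and their primitive roots differ by an automorphism. -/
theorem automorphism_iff_primitive_roots_and_exponents
    (G : Type*) [Group G]
    (hG : ∀ g : G, g ≠ 1 → ∃ z : G, ¬ IsOfFinOrder z ∧
      Subgroup.centralizer {g} = Subgroup.zpowers z)
    (γ η gbar hbar : G) (r s : ℤ)
    (hγ : γ ≠ 1) (hη : η ≠ 1)
    (hgbar : ∀ (h : G) (n : ℤ), gbar = h ^ n → n = 1 ∨ n = -1)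
    (hhbar : ∀ (h : G) (n : ℤ), hbar = h ^ n → n = 1 ∨ n = -1)
    (hr : 1 ≤ r) (hs : 1 ≤ s)
    (hγeq : γ = gbar ^ r) (hηeq : η = hbar ^ s) :
    (∃ φ : G ≃* G, φ γ = η) ↔
      (r = s ∧ ∃ ψ : G ≃* G, ψ gbar = hbar) := by
  constructor
  · rintro ⟨φ, hφ⟩
    set x := φ gbar with hx
    have hxprim : ∀ (h : G) (n : ℤ), x = h ^ n → n = 1 ∨ n = -1 := by
      intro h n hh
      apply hgbar (φ.symm h) n
      have := congrArg φ.symm hh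
      rw [hx] at this
      simpa using this
    have hxr : x ^ r = η := by
      rw [← hφ, hγeq, map_zpow]
    obtain ⟨z, hzord, hz⟩ := hG η hη
    have hinj : Function.Injective fun n : ℤ => z ^ n :=
      injective_zpow_iff_not_isOfFinOrder.mpr hzord
    have hxmem : x ∈ Subgroup.centralizer {η} := by
      rw [Subgroup.mem_centralizer_iff]
      intro g hg
      rw [Set.mem_singleton_iff] at hg
      subst hg
      rw [← hxr]
      exact ((Commute.refl x).zpow_right r).symm.eq
    have hbmem : hbar ∈ Subgroup.centralizer {η} := by
      rw [Subgroup.mem_centralizer_iff]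
      intro g hg
      rw [Set.mem_singleton_iff] at hg
      subst hg
      rw [hηeq]
      exact ((Commute.refl hbar).zpow_left s).eq
    rw [hz] at hxmem hbmem
    obtain ⟨a, ha⟩ := hxmem
    obtain ⟨b, hb⟩ := hbmem
    change z ^ a = x at ha
    change z ^ b = hbar at hb
    have ha' := hxprim z a ha.symm
    have hb' := hhbar z b hb.symm
    have key : z ^ (a * r) = z ^ (b * s) := by
      rw [zpow_mul, zpow_mul, ha, hb, hxr, hηeq]
    have hab : a * r = b * s := hinj key
    rcases ha' with rfl | rfl <;> rcases hb' with rfl | rfl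
    · simp only [one_mul] at hab
      subst hab
      refine ⟨rfl, φ, ?_⟩
      rw [← hx, ← ha, ← hb]
    · exfalso; simp only [one_mul, neg_one_mul] at hab; omega
    · exfalso; simp only [one_mul, neg_one_mul] at hab; omega
    · simp only [neg_one_mul, neg_inj] at hab
      subst hab
      refine ⟨rfl, φ, ?_⟩
      rw [← hx, ← ha, ← hb]
  · rintro ⟨rfl, ψ, hψ⟩
    exact ⟨ψ, by rw [hγeq, hηeq, map_zpow, hψ]⟩
end
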